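/- Let f : {0,1}^n → {0,1} and let M be a set of pairwise disjoint I-violating pairs for f of maximum cardinality (pairwise disjoint means no point of {0,1}^n appears in two different pairs of M). Then |M|/2^n ≤ dist_int(f) ≤ 2|M|/2^n. -/
import Mathlib


/-- Normalized Hamming distance between two Boolean functions on `{0,1}^n`. -/
noncomputable def hamDist {n : ℕ} (f g : (Fin n → Bool) → Bool) : ℝ :=
  ((Finset.univ.filter (fun x => f x ≠ g x)).card : ℝ) / 2 ^ n

/-- A Boolean function is intersecting if any two of its `1`-inputs share a coordinate
where both are `1`. -/
def IsIntersecting {n : ℕ} (g : (Fin n → Bool) → Bool) : Prop :=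
  ∀ x y : Fin n → Bool, g x = true → g y = true → ∃ i, x i = true ∧ y i = true

/-- Distance from `f` to the property of being intersecting (the minimum of
`hamDist f g` over intersecting `g`). -/
noncomputable def distInt {n : ℕ} (f : (Fin n → Bool) → Bool) : ℝ :=
  sInf (hamDist f '' {g | IsIntersecting g})

/-- `(x, y)` is an I-violating pair for `f`: `f(x) = f(y) = 1` and `x ∩ y = ∅`. -/
def IsIViolating {n : ℕ} (f : (Fin n → Bool) → Bool)
    (p : (Fin n → Bool) × (Fin n → Bool)) : Prop :=
  f p.1 = true ∧ f p.2 = true ∧ ¬ ∃ i, p.1 i = true ∧ p.2 i = true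

/-- The points of a pair. -/
def pairPoints {n : ℕ} (p : (Fin n → Bool) × (Fin n → Bool)) : Set (Fin n → Bool) :=
  {p.1, p.2}

lemma hamDist_nonneg {n : ℕ} (f g : (Fin n → Bool) → Bool) : 0 ≤ hamDist f g := by
  unfold hamDist; positivity

/-- If `M` is a maximum-cardinality set of pairwise disjoint I-violating
pairs for `f`, then `|M|/2^n ≤ dist_int(f) ≤ 2|M|/2^n`. -/
theorem dist_int_vs_max_disjoint_violating_pairs (n : ℕ) (f : (Fin n → Bool) → Bool)
    (M : Finset ((Fin n → Bool) × (Fin n → Bool)))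
    (hM : ∀ p ∈ M, IsIViolating f p)
    (hMdisj : ∀ p ∈ M, ∀ q ∈ M, p ≠ q → Disjoint (pairPoints p) (pairPoints q))
    (hmax : ∀ M' : Finset ((Fin n → Bool) × (Fin n → Bool)),
      (∀ p ∈ M', IsIViolating f p) →
      (∀ p ∈ M', ∀ q ∈ M', p ≠ q → Disjoint (pairPoints p) (pairPoints q)) →
      M'.card ≤ M.card) :
    (M.card : ℝ) / 2 ^ n ≤ distInt f ∧ distInt f ≤ 2 * (M.card : ℝ) / 2 ^ n := by
  have hpow : (0:ℝ) < 2 ^ n := by positivity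
  have hbdd : BddBelow (hamDist f '' {g | IsIntersecting g}) := by
    refine ⟨0, ?_⟩
    rintro r ⟨g, -, rfl⟩
    exact hamDist_nonneg f g
  constructor
  · -- lower bound
    apply le_csInf
    · exact ⟨hamDist f (fun _ => false), ⟨fun _ => false, by
        intro x y hx; simp at hx, rfl⟩⟩
    rintro r ⟨g, hg, rfl⟩
    have key : M.card ≤ (Finset.univ.filter (fun x => f x ≠ g x)).card := by
      have hne : ∀ p ∈ M, ¬ (g p.1 = true ∧ g p.2 = true) := by
        intro p hp ⟨h1, h2⟩
        exact (hM p hp).2.2 (hg p.1 p.2 h1 h2)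
      set c : ((Fin n → Bool) × (Fin n → Bool)) → (Fin n → Bool) :=
        fun p => if g p.1 = true then p.2 else p.1 with hc
      have hcmem : ∀ p ∈ M, c p ∈ Finset.univ.filter (fun x => f x ≠ g x) := by
        intro p hp
        simp only [Finset.mem_filter, Finset.mem_univ, true_and]
        by_cases h1 : g p.1 = true
        · have h2 : g p.2 ≠ true := fun h2 => hne p hp ⟨h1, h2⟩
          have : c p = p.2 := by simp [hc, h1]
          rw [this, (hM p hp).2.1]
          exact fun h => h2 h.symm
        · have : c p = p.1 := by simp [hc, h1]
          rw [this, (hM p hp).1]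
          exact fun h => h1 h.symm
      have hcp : ∀ p, c p ∈ pairPoints p := by
        intro p
        by_cases h1 : g p.1 = true <;> simp [hc, h1, pairPoints]
      apply Finset.card_le_card_of_injOn c (fun p hp => hcmem p hp)
      intro p hp q hq hpq
      by_contra hne'
      have := hMdisj p hp q hq hne'
      exact (Set.disjoint_left.mp this (hcp p)) (hpq ▸ hcp q)
    unfold hamDist
    have : (M.card : ℝ) ≤ ((Finset.univ.filter (fun x => f x ≠ g x)).card : ℝ) := by
      exact_mod_cast key
    exact div_le_div_of_nonneg_right this hpow.le
  · -- upper bound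
    set S : Finset (Fin n → Bool) := M.biUnion (fun p => {p.1, p.2}) with hS
    set g : (Fin n → Bool) → Bool := fun x => if x ∈ S then false else f x with hg
    have hgS : ∀ x, g x = true → x ∉ S ∧ f x = true := by
      intro x hx
      by_cases h : x ∈ S
      · simp [hg, h] at hx
      · simp [hg, h] at hx; exact ⟨h, hx⟩
    have hnotS_pts : ∀ x, x ∉ S → ∀ q ∈ M, x ∉ pairPoints q := by
      intro x hx q hq hmem
      apply hx
      rw [hS]
      simp only [Finset.mem_biUnion]
      rcases hmem with h | h
      · exact ⟨q, hq, by simp [h]⟩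
      · simp only [Set.mem_singleton_iff] at h
        exact ⟨q, hq, by simp [h]⟩
    have hgint : IsIntersecting g := by
      intro x y hx hy
      by_contra hno
      obtain ⟨hxS, hfx⟩ := hgS x hx
      obtain ⟨hyS, hfy⟩ := hgS y hy
      have hviol : IsIViolating f (x, y) := ⟨hfx, hfy, hno⟩
      have hxy_notM : (x, y) ∉ M := by
        intro h
        exact hnotS_pts x hxS (x, y) h (by simp [pairPoints])
      have hdisj' : ∀ q ∈ M, Disjoint (pairPoints (x, y)) (pairPoints q) := by
        intro q hq
        rw [Set.disjoint_left]
        intro a ha hma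
        simp only [pairPoints, Set.mem_insert_iff, Set.mem_singleton_iff] at ha
        rcases ha with rfl | rfl
        · exact hnotS_pts _ hxS q hq hma
        · exact hnotS_pts _ hyS q hq hma
      have := hmax (insert (x, y) M) ?_ ?_
      · rw [Finset.card_insert_of_notMem hxy_notM] at this; omega
      · intro p hp
        rcases Finset.mem_insert.mp hp with rfl | hp
        · exact hviol
        · exact hM p hp
      · intro p hp q hq hpq
        rcases Finset.mem_insert.mp hp with rfl | hp <;>
          rcases Finset.mem_insert.mp hq with rfl | hq
        · exact absurd rfl hpq
        · exact hdisj' q hq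
        · exact (hdisj' p hp).symm
        · exact hMdisj p hp q hq hpq
    have hcard : ((Finset.univ.filter (fun x => f x ≠ g x)).card : ℝ) ≤ 2 * M.card := by
      have hsub : Finset.univ.filter (fun x => f x ≠ g x) ⊆ S := by
        intro x hx
        simp only [Finset.mem_filter, Finset.mem_univ, true_and] at hx
        by_contra h
        exact hx (by simp [hg, h])
      have h1 : (Finset.univ.filter (fun x => f x ≠ g x)).card ≤ S.card :=
        Finset.card_le_card hsub
      have h2 : S.card ≤ 2 * M.card := by
        calc S.card ≤ ∑ p ∈ M, ({p.1, p.2} : Finset (Fin n → Bool)).card :=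
              Finset.card_biUnion_le
          _ ≤ ∑ p ∈ M, 2 := Finset.sum_le_sum (fun p _ => Finset.card_insert_le _ _)
          _ = 2 * M.card := by rw [Finset.sum_const, smul_eq_mul, mul_comm]
      exact_mod_cast le_trans h1 h2
    have hle : distInt f ≤ hamDist f g := csInf_le hbdd ⟨g, hgint, rfl⟩
    refine le_trans hle ?_
    rw [hamDist]
    rw [div_le_div_iff₀ hpow hpow]
    nlinarith [hcard]
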